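/- Let Ω ⊆ ℝⁿ be an open bounded set, let p ≥ 2, and let σ : Ω × [0,∞) → ℝ be measurable and satisfy the upper bound in (H4) with constants σ̄, E₀ and the coercivity (H5) with constant c > 0. Let φ : ℝⁿ → ℝ be weakly differentiable with ∇φ ∈ L²(Ω) ∩ L^p(Ω), and for each ε ∈ (0,1) let u_ε : ℝⁿ → ℝ be weakly differentiable with ∇u_ε ∈ L²(Ω) ∩ L^p(Ω); let u₀ be likewise. Assume sup_{ε ∈ (0,1)} ( ‖∇u_ε‖_{L²(Ω)} + ‖∇u_ε‖_{L^p(Ω)} ) < ∞, and that for every ε ∈ (0,1) the weak-formulation identities ∫_Ω σ(x,|∇u_ε|) ∇u_ε·(∇u_ε − ∇u₀ − ε∇φ) dx = 0 and ∫_Ω σ(x,|∇u₀|) ∇u₀·(∇u_ε − ∇u₀ − ε∇φ) dx = 0 hold. Then ∇u_ε → ∇u₀ in L^p(Ω) as ε → 0⁺. (Lemma 3.1: continuity of the gradient of the solution with respect to perturbations of the boundary datum.) -/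

import Mathlib

open MeasureTheory Set Filter
open scoped RealInnerProductSpace Topology

private lemma rpow_sub_one_mul {p d : ℝ} (hp : 2 ≤ p) (hd : 0 ≤ d) :
    d ^ (p - 1) * d = d ^ p := by
  rcases eq_or_lt_of_le hd with h | h
  · rw [← h, Real.zero_rpow (by linarith), Real.zero_rpow (by linarith), zero_mul]
  · rw [← Real.rpow_add_one h.ne' (p - 1), sub_add_cancel]

private lemma young_aux {p a d : ℝ} (hp : 2 ≤ p) (ha : 0 ≤ a) (hd : 0 ≤ d) :
    a ^ (p - 1) * d ≤ a ^ p + d ^ p := by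
  rcases le_total a d with h | h
  · calc a ^ (p - 1) * d ≤ d ^ (p - 1) * d :=
        mul_le_mul_of_nonneg_right (Real.rpow_le_rpow ha h (by linarith)) hd
    _ = d ^ p := rpow_sub_one_mul hp hd
    _ ≤ a ^ p + d ^ p := le_add_of_nonneg_left (Real.rpow_nonneg ha p)
  · calc a ^ (p - 1) * d ≤ a ^ (p - 1) * a :=
        mul_le_mul_of_nonneg_left h (Real.rpow_nonneg ha _)
    _ = a ^ p := rpow_sub_one_mul hp ha
    _ ≤ a ^ p + d ^ p := le_add_of_nonneg_right (Real.rpow_nonneg hd p)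

private lemma le_one_add_rpow {p d : ℝ} (hp : 1 ≤ p) (hd : 0 ≤ d) :
    d ≤ 1 + d ^ p := by
  rcases le_total d 1 with h | h
  · exact h.trans (le_add_of_nonneg_right (Real.rpow_nonneg hd p))
  · have : d ^ (1:ℝ) ≤ d ^ p := Real.rpow_le_rpow_of_exponent_le h hp
    rw [Real.rpow_one] at this
    exact this.trans (le_add_of_nonneg_left zero_le_one)

private lemma key_estimate {n : ℕ}
    (μ : Measure (EuclideanSpace ℝ (Fin n))) [IsFiniteMeasure μ]
    (p : ℝ) (hp : 2 ≤ p)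
    (σ : EuclideanSpace ℝ (Fin n) → ℝ → ℝ)
    (hσmeas : Measurable (Function.uncurry σ))
    (σu E₀ : ℝ) (hσu : 0 < σu) (hE₀ : 0 < E₀)
    (hupper : ∀ᵐ x ∂μ, ∀ E > (0:ℝ), σ x E ≤ σu * max 1 ((E / E₀) ^ (p - 2)))
    (c : ℝ) (hc : 0 < c)
    (hcoer : ∀ᵐ x ∂μ, ∀ a b : EuclideanSpace ℝ (Fin n),
      c * ‖b - a‖ ^ p ≤ ⟪σ x ‖b‖ • b - σ x ‖a‖ • a, b - a⟫)
    (g g₀ gφ : EuclideanSpace ℝ (Fin n) → EuclideanSpace ℝ (Fin n))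
    (hg : MemLp g (ENNReal.ofReal p) μ) (hg₀ : MemLp g₀ (ENNReal.ofReal p) μ)
    (hgφ : MemLp gφ (ENNReal.ofReal p) μ)
    (ε : ℝ) (hε : 0 < ε) (hε1 : ε < 1)
    (hw1 : ∫ x, σ x ‖g x‖ * ⟪g x, g x - g₀ x - ε • gφ x⟫ ∂μ = 0)
    (hw0 : ∫ x, σ x ‖g₀ x‖ * ⟪g₀ x, g x - g₀ x - ε • gφ x⟫ ∂μ = 0) :
    c * ∫ x, ‖g x - g₀ x‖ ^ p ∂μ ≤
      ε * ((σu * (1 + max 1 (E₀ ^ (2-p)))) *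
        (2 * (μ Set.univ).toReal + (∫ x, ‖g x‖ ^ p ∂μ) + (∫ x, ‖g₀ x‖ ^ p ∂μ)
          + 4 * (∫ x, ‖gφ x‖ ^ p ∂μ))) := by
  have hp0 : (0:ℝ) < p := by linarith
  have hq0 : ENNReal.ofReal p ≠ 0 := by
    simp only [ne_eq, ENNReal.ofReal_eq_zero, not_le]; exact hp0
  have hqt : ENNReal.ofReal p ≠ ⊤ := ENNReal.ofReal_ne_top
  have hqr : (ENNReal.ofReal p).toReal = p := ENNReal.toReal_ofReal hp0.le
  set C : ℝ := σu * (1 + max 1 (E₀ ^ (2-p))) with hCdef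
  have hC : 0 < C := by
    have : (0:ℝ) ≤ max 1 (E₀ ^ (2-p)) := le_trans zero_le_one (le_max_left _ _)
    positivity
  -- step 1: pointwise bound on the norm of σ x ‖v‖ • v
  have hSbound : ∀ᵐ x ∂μ, ∀ v : EuclideanSpace ℝ (Fin n),
      ‖σ x ‖v‖ • v‖ ≤ C * (1 + ‖v‖ ^ (p - 1)) := by
    filter_upwards [hupper, hcoer] with x hux hcx
    intro v
    rcases eq_or_ne v 0 with rfl | hv
    · simp only [norm_zero, smul_zero]
      positivity
    · have hvn : 0 < ‖v‖ := norm_pos_iff.2 hv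
      have hσpos : 0 ≤ σ x ‖v‖ := by
        have h1 := hcx 0 v
        rw [norm_zero, smul_zero, sub_zero, sub_zero, real_inner_smul_left,
          real_inner_self_eq_norm_sq] at h1
        nlinarith [mul_pos hc (Real.rpow_pos_of_pos hvn p), sq_nonneg ‖v‖, mul_pos hvn hvn]
      have hupE := hux ‖v‖ hvn
      have hmax : max 1 ((‖v‖ / E₀) ^ (p - 2)) ≤ 1 + (‖v‖ / E₀) ^ (p - 2) :=
        max_le (le_add_of_nonneg_right (Real.rpow_nonneg (by positivity) _)) (by
          exact le_add_of_nonneg_left zero_le_one)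
      have hdiv : (‖v‖ / E₀) ^ (p - 2) = E₀ ^ (2 - p) * ‖v‖ ^ (p - 2) := by
        rw [Real.div_rpow (norm_nonneg v) hE₀.le]
        rw [show (2 - p : ℝ) = -(p - 2) by ring, Real.rpow_neg hE₀.le]
        ring
      have hmul : ‖v‖ ^ (p - 2) * ‖v‖ = ‖v‖ ^ (p - 1) := by
        rw [← Real.rpow_add_one hvn.ne' (p - 2)]
        norm_num [show p - 2 + 1 = p - 1 from by ring]
      have hnorm : ‖σ x ‖v‖ • v‖ = σ x ‖v‖ * ‖v‖ := by
        rw [norm_smul, Real.norm_eq_abs, abs_of_nonneg hσpos]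
      rw [hnorm]
      have h2 : σ x ‖v‖ * ‖v‖ ≤ σu * (1 + (‖v‖ / E₀) ^ (p - 2)) * ‖v‖ := by
        apply mul_le_mul_of_nonneg_right _ (norm_nonneg v)
        exact hupE.trans (mul_le_mul_of_nonneg_left hmax hσu.le)
      refine h2.trans ?_
      rw [hdiv]
      have hK1 : E₀ ^ (2 - p) ≤ max 1 (E₀ ^ (2-p)) := le_max_right _ _
      have hK0 : (0:ℝ) ≤ max 1 (E₀ ^ (2-p)) := le_trans zero_le_one (le_max_left _ _)
      have hv1 : ‖v‖ ≤ 1 + ‖v‖ ^ (p - 1) := le_one_add_rpow (by linarith) (norm_nonneg v)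
      have hE2 : (0:ℝ) ≤ E₀ ^ (2 - p) := Real.rpow_nonneg hE₀.le _
      have hvp1 : (0:ℝ) ≤ ‖v‖ ^ (p - 1) := Real.rpow_nonneg (norm_nonneg v) _
      have hvp2 : (0:ℝ) ≤ ‖v‖ ^ (p - 2) := Real.rpow_nonneg (norm_nonneg v) _
      calc σu * (1 + E₀ ^ (2 - p) * ‖v‖ ^ (p - 2)) * ‖v‖
          = σu * ‖v‖ + σu * E₀ ^ (2 - p) * (‖v‖ ^ (p - 2) * ‖v‖) := by ring
        _ = σu * ‖v‖ + σu * E₀ ^ (2 - p) * ‖v‖ ^ (p - 1) := by rw [hmul]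
        _ ≤ C * (1 + ‖v‖ ^ (p - 1)) := by
            rw [hCdef]
            nlinarith [mul_le_mul_of_nonneg_right hK1 hvp1,
              mul_le_mul_of_nonneg_left hv1 hσu.le,
              mul_le_mul_of_nonneg_left (mul_le_mul_of_nonneg_right hK1 hvp1) hσu.le,
              mul_nonneg (mul_nonneg hσu.le hK0) hvp1]
  -- step 2: master a.e. bound for the integrands
  have hbnd : ∀ᵐ x ∂μ, ∀ v w : EuclideanSpace ℝ (Fin n),
      |σ x ‖v‖ * ⟪v, w⟫| ≤ C * (1 + ‖v‖ ^ p + 2 * ‖w‖ ^ p) := by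
    filter_upwards [hSbound] with x hx
    intro v w
    have h1 : |σ x ‖v‖ * ⟪v, w⟫| = |⟪σ x ‖v‖ • v, w⟫| := by
      rw [real_inner_smul_left]
    have h2 : |⟪σ x ‖v‖ • v, w⟫| ≤ ‖σ x ‖v‖ • v‖ * ‖w‖ := abs_real_inner_le_norm _ _
    have h3 : ‖σ x ‖v‖ • v‖ * ‖w‖ ≤ C * (1 + ‖v‖ ^ (p - 1)) * ‖w‖ :=
      mul_le_mul_of_nonneg_right (hx v) (norm_nonneg w)
    have h4 : ‖v‖ ^ (p - 1) * ‖w‖ ≤ ‖v‖ ^ p + ‖w‖ ^ p :=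
      young_aux hp (norm_nonneg v) (norm_nonneg w)
    have h5 : ‖w‖ ≤ 1 + ‖w‖ ^ p := le_one_add_rpow (by linarith) (norm_nonneg w)
    calc |σ x ‖v‖ * ⟪v, w⟫| = |⟪σ x ‖v‖ • v, w⟫| := h1
      _ ≤ C * (1 + ‖v‖ ^ (p - 1)) * ‖w‖ := h2.trans h3
      _ = C * (‖w‖ + ‖v‖ ^ (p - 1) * ‖w‖) := by ring
      _ ≤ C * ((1 + ‖w‖ ^ p) + (‖v‖ ^ p + ‖w‖ ^ p)) := by
          exact mul_le_mul_of_nonneg_left (by linarith) hC.le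
      _ = C * (1 + ‖v‖ ^ p + 2 * ‖w‖ ^ p) := by ring
  -- integrability facts
  have hIg : Integrable (fun x => ‖g x‖ ^ p) μ := by
    simpa [hqr] using hg.integrable_norm_rpow hq0 hqt
  have hIg₀ : Integrable (fun x => ‖g₀ x‖ ^ p) μ := by
    simpa [hqr] using hg₀.integrable_norm_rpow hq0 hqt
  have hIgφ : Integrable (fun x => ‖gφ x‖ ^ p) μ := by
    simpa [hqr] using hgφ.integrable_norm_rpow hq0 hqt
  have hwLp : MemLp (fun x => g x - g₀ x - ε • gφ x) (ENNReal.ofReal p) μ :=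
    (hg.sub hg₀).sub (hgφ.const_smul ε)
  have hIw : Integrable (fun x => ‖g x - g₀ x - ε • gφ x‖ ^ p) μ := by
    simpa [hqr] using hwLp.integrable_norm_rpow hq0 hqt
  have hggLp : MemLp (fun x => g x - g₀ x) (ENNReal.ofReal p) μ := hg.sub hg₀
  have hIgg : Integrable (fun x => ‖g x - g₀ x‖ ^ p) μ := by
    simpa [hqr] using hggLp.integrable_norm_rpow hq0 hqt
  -- generic integrability of the integrands
  have hint : ∀ v w' : EuclideanSpace ℝ (Fin n) → EuclideanSpace ℝ (Fin n),
      MemLp v (ENNReal.ofReal p) μ → MemLp w' (ENNReal.ofReal p) μ →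
      Integrable (fun x => ‖v x‖ ^ p) μ → Integrable (fun x => ‖w' x‖ ^ p) μ →
      Integrable (fun x => σ x ‖v x‖ * ⟪v x, w' x⟫) μ := by
    intro v w' hv hw' hIv hIw'
    have hσv : AEMeasurable (fun x => σ x ‖v x‖) μ :=
      hσmeas.comp_aemeasurable (aemeasurable_id.prodMk hv.1.norm.aemeasurable)
    have hmeas : AEStronglyMeasurable (fun x => σ x ‖v x‖ * ⟪v x, w' x⟫) μ :=
      hσv.aestronglyMeasurable.mul (hv.1.inner hw'.1)
    refine Integrable.mono'
      (g := fun x => C * (1 + ‖v x‖ ^ p + 2 * ‖w' x‖ ^ p)) ?_ hmeas ?_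
    · exact (((integrable_const (1:ℝ)).add hIv).add (hIw'.const_mul 2)).const_mul C
    · filter_upwards [hbnd] with x hx
      rw [Real.norm_eq_abs]
      exact hx (v x) (w' x)
  have h₁ : Integrable (fun x => σ x ‖g x‖ * ⟪g x, g x - g₀ x - ε • gφ x⟫) μ :=
    hint g _ hg hwLp hIg hIw
  have h₂ : Integrable (fun x => σ x ‖g₀ x‖ * ⟪g₀ x, g x - g₀ x - ε • gφ x⟫) μ :=
    hint g₀ _ hg₀ hwLp hIg₀ hIw
  have h₃ : Integrable (fun x => σ x ‖g x‖ * ⟪g x, g x - g₀ x⟫) μ :=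
    hint g _ hg hggLp hIg hIgg
  have h₄ : Integrable (fun x => σ x ‖g₀ x‖ * ⟪g₀ x, g x - g₀ x⟫) μ :=
    hint g₀ _ hg₀ hggLp hIg₀ hIgg
  have h₅ : Integrable (fun x => σ x ‖g x‖ * ⟪g x, gφ x⟫) μ :=
    hint g gφ hg hgφ hIg hIgφ
  have h₆ : Integrable (fun x => σ x ‖g₀ x‖ * ⟪g₀ x, gφ x⟫) μ :=
    hint g₀ gφ hg₀ hgφ hIg₀ hIgφ
  have h34 : Integrable (fun x => σ x ‖g x‖ * ⟪g x, g x - g₀ x⟫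
      - σ x ‖g₀ x‖ * ⟪g₀ x, g x - g₀ x⟫) μ := h₃.sub h₄
  have h56 : Integrable (fun x => σ x ‖g x‖ * ⟪g x, gφ x⟫
      - σ x ‖g₀ x‖ * ⟪g₀ x, gφ x⟫) μ := h₅.sub h₆
  -- the subtracted weak formulation
  have e1 : (∫ x, σ x ‖g x‖ * ⟪g x, g x - g₀ x⟫ ∂μ)
        - (∫ x, σ x ‖g₀ x‖ * ⟪g₀ x, g x - g₀ x⟫ ∂μ)
      = ε * ((∫ x, σ x ‖g x‖ * ⟪g x, gφ x⟫ ∂μ)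
        - (∫ x, σ x ‖g₀ x‖ * ⟪g₀ x, gφ x⟫ ∂μ)) := by
    have e0 : ∫ x, (σ x ‖g x‖ * ⟪g x, g x - g₀ x - ε • gφ x⟫
        - σ x ‖g₀ x‖ * ⟪g₀ x, g x - g₀ x - ε • gφ x⟫) ∂μ = 0 := by
      rw [integral_sub h₁ h₂, hw1, hw0, sub_zero]
    have e2 : ∫ x, (σ x ‖g x‖ * ⟪g x, g x - g₀ x - ε • gφ x⟫
        - σ x ‖g₀ x‖ * ⟪g₀ x, g x - g₀ x - ε • gφ x⟫) ∂μ
        = (∫ x, (σ x ‖g x‖ * ⟪g x, g x - g₀ x⟫ - σ x ‖g₀ x‖ * ⟪g₀ x, g x - g₀ x⟫) ∂μ)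
          - ε * ∫ x, (σ x ‖g x‖ * ⟪g x, gφ x⟫ - σ x ‖g₀ x‖ * ⟪g₀ x, gφ x⟫) ∂μ := by
      rw [← integral_const_mul, ← integral_sub h34 (h56.const_mul ε)]
      refine integral_congr_ae (Eventually.of_forall fun x => ?_)
      simp only [inner_sub_right, real_inner_smul_right]
      ring
    rw [e2, integral_sub h₃ h₄, integral_sub h₅ h₆] at e0
    linarith
  -- coercivity under the integral
  have e3 : c * ∫ x, ‖g x - g₀ x‖ ^ p ∂μ
      ≤ (∫ x, σ x ‖g x‖ * ⟪g x, g x - g₀ x⟫ ∂μ)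
        - (∫ x, σ x ‖g₀ x‖ * ⟪g₀ x, g x - g₀ x⟫ ∂μ) := by
    rw [← integral_sub h₃ h₄, ← integral_const_mul]
    apply integral_mono_ae (hIgg.const_mul c) h34
    filter_upwards [hcoer] with x hx
    have h := hx (g₀ x) (g x)
    rw [inner_sub_left, real_inner_smul_left, real_inner_smul_left] at h
    exact h
  -- bound on the φ terms
  have habs : ∀ v : EuclideanSpace ℝ (Fin n) → EuclideanSpace ℝ (Fin n),
      Integrable (fun x => ‖v x‖ ^ p) μ →
      Integrable (fun x => σ x ‖v x‖ * ⟪v x, gφ x⟫) μ →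
      |∫ x, σ x ‖v x‖ * ⟪v x, gφ x⟫ ∂μ|
        ≤ C * ((μ Set.univ).toReal + (∫ x, ‖v x‖ ^ p ∂μ) + 2 * ∫ x, ‖gφ x‖ ^ p ∂μ) := by
    intro v hIv h'
    have habs0 : |∫ x, σ x ‖v x‖ * ⟪v x, gφ x⟫ ∂μ| ≤ ∫ x, |σ x ‖v x‖ * ⟪v x, gφ x⟫| ∂μ := by
      simpa only [Real.norm_eq_abs] using
        norm_integral_le_integral_norm (μ := μ) (fun x => σ x ‖v x‖ * ⟪v x, gφ x⟫)
    refine habs0.trans ?_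
    have step : ∫ x, |σ x ‖v x‖ * ⟪v x, gφ x⟫| ∂μ
        ≤ ∫ x, C * (1 + ‖v x‖ ^ p + 2 * ‖gφ x‖ ^ p) ∂μ := by
      apply integral_mono_ae h'.abs
        ((((integrable_const (1:ℝ)).add hIv).add (hIgφ.const_mul 2)).const_mul C)
      filter_upwards [hbnd] with x hx using hx (v x) (gφ x)
    refine step.trans (le_of_eq ?_)
    rw [integral_const_mul]
    congr 1
    have hIb1 : Integrable (fun x => 1 + ‖v x‖ ^ p) μ := (integrable_const (1:ℝ)).add hIv
    rw [integral_add hIb1 (hIgφ.const_mul 2),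
      integral_add (integrable_const (1:ℝ)) hIv, integral_const_mul, integral_const]
    simp [mul_comm, Measure.real]
  have b5 := habs g hIg h₅
  have b6 := habs g₀ hIg₀ h₆
  have hb5 := abs_le.1 b5
  have hb6 := abs_le.1 b6
  have e4 : (∫ x, σ x ‖g x‖ * ⟪g x, gφ x⟫ ∂μ) - (∫ x, σ x ‖g₀ x‖ * ⟪g₀ x, gφ x⟫ ∂μ)
      ≤ C * (2 * (μ Set.univ).toReal + (∫ x, ‖g x‖ ^ p ∂μ) + (∫ x, ‖g₀ x‖ ^ p ∂μ)
          + 4 * (∫ x, ‖gφ x‖ ^ p ∂μ)) := by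
    have hring : C * ((μ Set.univ).toReal + (∫ x, ‖g x‖ ^ p ∂μ) + 2 * ∫ x, ‖gφ x‖ ^ p ∂μ)
        + C * ((μ Set.univ).toReal + (∫ x, ‖g₀ x‖ ^ p ∂μ) + 2 * ∫ x, ‖gφ x‖ ^ p ∂μ)
        = C * (2 * (μ Set.univ).toReal + (∫ x, ‖g x‖ ^ p ∂μ) + (∫ x, ‖g₀ x‖ ^ p ∂μ)
          + 4 * (∫ x, ‖gφ x‖ ^ p ∂μ)) := by ring
    linarith
  calc c * ∫ x, ‖g x - g₀ x‖ ^ p ∂μ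
      ≤ (∫ x, σ x ‖g x‖ * ⟪g x, g x - g₀ x⟫ ∂μ)
        - (∫ x, σ x ‖g₀ x‖ * ⟪g₀ x, g x - g₀ x⟫ ∂μ) := e3
    _ = ε * ((∫ x, σ x ‖g x‖ * ⟪g x, gφ x⟫ ∂μ)
        - (∫ x, σ x ‖g₀ x‖ * ⟪g₀ x, gφ x⟫ ∂μ)) := e1
    _ ≤ ε * (C * (2 * (μ Set.univ).toReal + (∫ x, ‖g x‖ ^ p ∂μ) + (∫ x, ‖g₀ x‖ ^ p ∂μ)
          + 4 * (∫ x, ‖gφ x‖ ^ p ∂μ))) := mul_le_mul_of_nonneg_left e4 hε.le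

/-- **Lemma 3.1** (continuity of the gradient of the solution with respect to perturbations
of the boundary datum): under the upper bound of (H4), the coercivity (H5), a uniform bound
on the norms of `∇u_ε`, and the weak-formulation identities, `∇u_ε → ∇u₀` in `L^p(Ω)`
as `ε → 0⁺`. -/
theorem gradient_continuity_wrt_boundary_data
    {n : ℕ} (Ω : Set (EuclideanSpace ℝ (Fin n)))
    (hΩo : IsOpen Ω) (hΩb : Bornology.IsBounded Ω)
    (p : ℝ) (hp : 2 ≤ p)
    (σ : EuclideanSpace ℝ (Fin n) → ℝ → ℝ)
    (hσmeas : Measurable (Function.uncurry σ))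
    -- upper bound in (H4)
    (σu E₀ : ℝ) (hσu : 0 < σu) (hE₀ : 0 < E₀)
    (hupper : ∀ᵐ x ∂(volume.restrict Ω), ∀ E > (0:ℝ),
      σ x E ≤ σu * max 1 ((E / E₀) ^ (p - 2)))
    -- coercivity (H5)
    (c : ℝ) (hc : 0 < c)
    (hcoer : ∀ᵐ x ∂(volume.restrict Ω), ∀ a b : EuclideanSpace ℝ (Fin n),
      c * ‖b - a‖ ^ p ≤ ⟪σ x ‖b‖ • b - σ x ‖a‖ • a, b - a⟫)
    -- the direction φ, weakly differentiable with gradient in L²(Ω) ∩ L^p(Ω)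
    (φ : EuclideanSpace ℝ (Fin n) → ℝ) (hφ : Differentiable ℝ φ)
    (hφL2 : MemLp (fun x => gradient φ x) 2 (volume.restrict Ω))
    (hφLp : MemLp (fun x => gradient φ x) (ENNReal.ofReal p) (volume.restrict Ω))
    -- u₀ and the family u_ε, weakly differentiable with gradients in L²(Ω) ∩ L^p(Ω)
    (u₀ : EuclideanSpace ℝ (Fin n) → ℝ) (hu₀ : Differentiable ℝ u₀)
    (hu₀L2 : MemLp (fun x => gradient u₀ x) 2 (volume.restrict Ω))
    (hu₀Lp : MemLp (fun x => gradient u₀ x) (ENNReal.ofReal p) (volume.restrict Ω))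
    (u : ℝ → EuclideanSpace ℝ (Fin n) → ℝ)
    (hu : ∀ ε ∈ Set.Ioo (0:ℝ) 1, Differentiable ℝ (u ε))
    (huL2 : ∀ ε ∈ Set.Ioo (0:ℝ) 1,
      MemLp (fun x => gradient (u ε) x) 2 (volume.restrict Ω))
    (huLp : ∀ ε ∈ Set.Ioo (0:ℝ) 1,
      MemLp (fun x => gradient (u ε) x) (ENNReal.ofReal p) (volume.restrict Ω))
    -- uniform bound on the norms of the gradients
    (hbound : ∃ M : ℝ, ∀ ε ∈ Set.Ioo (0:ℝ) 1,
      (eLpNorm (fun x => gradient (u ε) x) 2 (volume.restrict Ω)).toReal +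
        (eLpNorm (fun x => gradient (u ε) x) (ENNReal.ofReal p) (volume.restrict Ω)).toReal
        ≤ M)
    -- the two weak-formulation identities, for each ε ∈ (0,1)
    (hweak₁ : ∀ ε ∈ Set.Ioo (0:ℝ) 1,
      ∫ x in Ω, σ x ‖gradient (u ε) x‖ *
        ⟪gradient (u ε) x, gradient (u ε) x - gradient u₀ x - ε • gradient φ x⟫ = 0)
    (hweak₀ : ∀ ε ∈ Set.Ioo (0:ℝ) 1,
      ∫ x in Ω, σ x ‖gradient u₀ x‖ *
        ⟪gradient u₀ x, gradient (u ε) x - gradient u₀ x - ε • gradient φ x⟫ = 0) :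
    Tendsto (fun ε : ℝ =>
        eLpNorm (fun x => gradient (u ε) x - gradient u₀ x)
          (ENNReal.ofReal p) (volume.restrict Ω))
      (𝓝[Set.Ioo (0:ℝ) 1] 0) (𝓝 0) := by
  obtain ⟨M, hM⟩ := hbound
  haveI : IsFiniteMeasure (volume.restrict Ω) :=
    ⟨by rw [Measure.restrict_apply_univ]; exact hΩb.measure_lt_top⟩
  have hp0 : (0:ℝ) < p := by linarith
  have hq0 : ENNReal.ofReal p ≠ 0 := by
    simp only [ne_eq, ENNReal.ofReal_eq_zero, not_le]; exact hp0
  have hqt : ENNReal.ofReal p ≠ ⊤ := ENNReal.ofReal_ne_top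
  have hqr : (ENNReal.ofReal p).toReal = p := ENNReal.toReal_ofReal hp0.le
  have hM0 : 0 ≤ M :=
    le_trans (by positivity) (hM (1/2) (by norm_num))
  set C : ℝ := σu * (1 + max 1 (E₀ ^ (2-p))) with hCdef
  have hC : 0 < C := by
    have : (0:ℝ) ≤ max 1 (E₀ ^ (2-p)) := le_trans zero_le_one (le_max_left _ _)
    positivity
  set B₀ : ℝ := ∫ x in Ω, ‖gradient u₀ x‖ ^ p with hB₀def
  set Bφ : ℝ := ∫ x in Ω, ‖gradient φ x‖ ^ p with hBφdef
  have hB₀0 : 0 ≤ B₀ := integral_nonneg fun x => Real.rpow_nonneg (norm_nonneg _) _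
  have hBφ0 : 0 ≤ Bφ := integral_nonneg fun x => Real.rpow_nonneg (norm_nonneg _) _
  set K : ℝ := C * (2 * ((volume.restrict Ω) Set.univ).toReal + M ^ p + B₀ + 4 * Bφ)
    with hKdef
  have hK0 : 0 ≤ K := by
    have h1 : (0:ℝ) ≤ ((volume.restrict Ω) Set.univ).toReal := ENNReal.toReal_nonneg
    have h2 : (0:ℝ) ≤ M ^ p := Real.rpow_nonneg hM0 _
    rw [hKdef]; positivity
  -- the key per-ε integral estimate
  have key : ∀ ε ∈ Set.Ioo (0:ℝ) 1,
      (∫ x in Ω, ‖gradient (u ε) x - gradient u₀ x‖ ^ p) ≤ ε * K / c := by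
    intro ε hε
    have h := key_estimate (volume.restrict Ω) p hp σ hσmeas σu E₀ hσu hE₀ hupper c hc hcoer
      (fun x => gradient (u ε) x) (fun x => gradient u₀ x) (fun x => gradient φ x)
      (huLp ε hε) hu₀Lp hφLp ε hε.1 hε.2 (hweak₁ ε hε) (hweak₀ ε hε)
    have hIa0 : 0 ≤ ∫ x in Ω, ‖gradient (u ε) x‖ ^ p :=
      integral_nonneg fun x => Real.rpow_nonneg (norm_nonneg _) _
    have hMa : (∫ x in Ω, ‖gradient (u ε) x‖ ^ p) ≤ M ^ p := by
      have hsn := (huLp ε hε).eLpNorm_eq_integral_rpow_norm hq0 hqt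
      simp only [hqr] at hsn
      have h3 : (eLpNorm (fun x => gradient (u ε) x) (ENNReal.ofReal p)
          (volume.restrict Ω)).toReal ≤ M :=
        le_trans (le_add_of_nonneg_left ENNReal.toReal_nonneg) (hM ε hε)
      rw [hsn, ENNReal.toReal_ofReal (Real.rpow_nonneg hIa0 _)] at h3
      calc (∫ x in Ω, ‖gradient (u ε) x‖ ^ p)
          = ((∫ x in Ω, ‖gradient (u ε) x‖ ^ p) ^ p⁻¹) ^ p :=
            (Real.rpow_inv_rpow hIa0 hp0.ne').symm
        _ ≤ M ^ p := Real.rpow_le_rpow (Real.rpow_nonneg hIa0 _) h3 hp0.le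
    have h4 : c * (∫ x in Ω, ‖gradient (u ε) x - gradient u₀ x‖ ^ p) ≤ ε * K := by
      refine h.trans ?_
      rw [hKdef]
      have h5 : C * (2 * ((volume.restrict Ω) Set.univ).toReal
            + (∫ x in Ω, ‖gradient (u ε) x‖ ^ p) + B₀ + 4 * Bφ)
          ≤ C * (2 * ((volume.restrict Ω) Set.univ).toReal + M ^ p + B₀ + 4 * Bφ) :=
        mul_le_mul_of_nonneg_left (by linarith) hC.le
      exact mul_le_mul_of_nonneg_left h5 hε.1.le
    rw [le_div_iff₀ hc]
    linarith [h4]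
  -- translate into a bound on the `eLpNorm`
  have hbound2 : ∀ ε ∈ Set.Ioo (0:ℝ) 1,
      eLpNorm (fun x => gradient (u ε) x - gradient u₀ x) (ENNReal.ofReal p)
          (volume.restrict Ω)
        ≤ ENNReal.ofReal ((ε * K / c) ^ p⁻¹) := by
    intro ε hε
    have hmem : MemLp (fun x => gradient (u ε) x - gradient u₀ x) (ENNReal.ofReal p)
        (volume.restrict Ω) := (huLp ε hε).sub hu₀Lp
    rw [hmem.eLpNorm_eq_integral_rpow_norm hq0 hqt]
    apply ENNReal.ofReal_le_ofReal
    simp only [hqr]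
    exact Real.rpow_le_rpow
      (integral_nonneg fun x => Real.rpow_nonneg (norm_nonneg _) _)
      (key ε hε) (by positivity)
  -- squeeze
  have htend : Tendsto (fun ε : ℝ => ENNReal.ofReal ((ε * K / c) ^ p⁻¹))
      (𝓝[Set.Ioo (0:ℝ) 1] 0) (𝓝 0) := by
    have l1 : Tendsto (fun ε : ℝ => ε * K / c) (𝓝[Set.Ioo (0:ℝ) 1] 0) (𝓝 0) := by
      have l0 : Tendsto (fun ε : ℝ => ε * K / c) (𝓝 0) (𝓝 (0 * K / c)) :=
        ((continuous_id.mul continuous_const).div_const c).tendsto 0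
      rw [zero_mul, zero_div] at l0
      exact l0.mono_left nhdsWithin_le_nhds
    have l2 : Tendsto (fun s : ℝ => ENNReal.ofReal (s ^ p⁻¹)) (𝓝 0) (𝓝 0) := by
      have h0 : ContinuousAt (fun s : ℝ => s ^ p⁻¹) 0 :=
        Real.continuousAt_rpow_const 0 p⁻¹ (Or.inr (by positivity))
      have h1 : Tendsto (fun s : ℝ => s ^ p⁻¹) (𝓝 0) (𝓝 ((0:ℝ) ^ p⁻¹)) := h0.tendsto
      rw [Real.zero_rpow (by positivity)] at h1
      have h2 : Tendsto ENNReal.ofReal (𝓝 0) (𝓝 (ENNReal.ofReal 0)) :=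
        ENNReal.continuous_ofReal.tendsto 0
      rw [ENNReal.ofReal_zero] at h2
      exact h2.comp h1
    exact l2.comp l1
  refine tendsto_of_tendsto_of_tendsto_of_le_of_le' tendsto_const_nhds htend ?_ ?_
  · exact Eventually.of_forall fun ε => zero_le
  · filter_upwards [self_mem_nhdsWithin] with ε hε using hbound2 ε hε
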